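/- Let r : ℂⁿ → ℝ be a smooth function such that Ω = {z : r(z) < 0} is nonempty, ∇r(z) ≠ 0 whenever r(z) = 0, and r is strictly plurisubharmonic on an open neighborhood of the closure of Ω. Then there exist a constant C > 0 and a smooth plurisubharmonic function φ : Ω → ℝ with 0 ≤ φ ≤ C on Ω such that all eigenvalues of the complex Hessian of φ tend to infinity at every boundary point: for every p ∈ ∂Ω and every M > 0 there is δ > 0 such that L_φ(z;t) ≥ M|t|² for all z ∈ Ω with |z − p| < δ and all t ∈ ℂⁿ. -/

import Mathlib

open MeasureTheory Complex Metric Filter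
noncomputable section

/-- `ℂⁿ` with its Euclidean inner product and norm. -/
abbrev Cn (n : ℕ) := EuclideanSpace ℂ (Fin n)

instance {n : ℕ} : MeasurableSpace (Cn n) := MeasurableSpace.comap (WithLp.ofLp (p := 2)) MeasurableSpace.pi

/-- Lebesgue measure on `ℂⁿ ≅ ℝ^{2n}`. -/
instance {n : ℕ} : MeasureSpace (Cn n) := ⟨(MeasureTheory.Measure.pi fun _ => volume).map (WithLp.toLp 2)⟩

/-- The real coordinate direction indexed by `(j, b)`: the `x_j`-direction if `b = false`,
the `y_j`-direction if `b = true`. -/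
def dir {n : ℕ} (l : Fin n × Bool) : Cn n :=
  EuclideanSpace.single l.1 (if l.2 then Complex.I else 1)

/-- The real partial derivative `∂_l`, `l` ranging over the `2n` real coordinate
directions of `ℂⁿ`. -/
def pd {n : ℕ} {F : Type} [NormedAddCommGroup F] [NormedSpace ℝ F]
    (l : Fin n × Bool) (f : Cn n → F) (z : Cn n) : F :=
  fderiv ℝ f z (dir l)

/-- The real Laplacian `Δφ = Σ_l ∂_l ∂_l φ`. -/
def lap {n : ℕ} (φ : Cn n → ℝ) (z : Cn n) : ℝ :=
  ∑ l : Fin n × Bool, pd l (pd l φ) z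

/-- `|∇φ|²`, the squared norm of the real gradient. -/
def gradSq {n : ℕ} (φ : Cn n → ℝ) (z : Cn n) : ℝ :=
  ∑ l : Fin n × Bool, (pd l φ z)^2

/-- The Levi form `L_u(z;t) = ¼(D²u(z)(t,t) + D²u(z)(it,it))`. -/
def levi {n : ℕ} (u : Cn n → ℝ) (z t : Cn n) : ℝ :=
  (1/4) * (fderiv ℝ (fun w => fderiv ℝ u w t) z t
    + fderiv ℝ (fun w => fderiv ℝ u w (Complex.I • t)) z (Complex.I • t))

/-- The Wirtinger derivative `∂g/∂z_j = ½(∂g/∂x_j − i ∂g/∂y_j)` of a complex-valued function. -/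
def wz {n : ℕ} (j : Fin n) (g : Cn n → ℂ) (z : Cn n) : ℂ :=
  (1/2) * (pd (j, false) g z - Complex.I * pd (j, true) g z)

/-- The Wirtinger derivative `∂g/∂z̄_j = ½(∂g/∂x_j + i ∂g/∂y_j)` of a complex-valued function. -/
def wzbar {n : ℕ} (j : Fin n) (g : Cn n → ℂ) (z : Cn n) : ℂ :=
  (1/2) * (pd (j, false) g z + Complex.I * pd (j, true) g z)

/-- The Wirtinger derivative `∂φ/∂z_j` of a real-valued function. -/
def wzR {n : ℕ} (j : Fin n) (φ : Cn n → ℝ) (z : Cn n) : ℂ :=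
  (1/2) * (Complex.ofReal (pd (j, false) φ z) - Complex.I * Complex.ofReal (pd (j, true) φ z))

/-- The Wirtinger derivative `∂φ/∂z̄_j` of a real-valued function. -/
def wzbarR {n : ℕ} (j : Fin n) (φ : Cn n → ℝ) (z : Cn n) : ℂ :=
  (1/2) * (Complex.ofReal (pd (j, false) φ z) + Complex.I * Complex.ofReal (pd (j, true) φ z))

/-- The complex Hessian coefficient `∂²φ/∂z_j∂z̄_k`. -/
def hess {n : ℕ} (φ : Cn n → ℝ) (j k : Fin n) (z : Cn n) : ℂ :=
  wz j (fun w => wzbarR k φ w) z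

/-- `∂̄*_φ f = −Σ_j (∂f_j/∂z_j − (∂φ/∂z_j) f_j)` for a `(0,1)`-form `f = (f_1,…,f_n)`. -/
def dbarStar {n : ℕ} (φ : Cn n → ℝ) (f : Fin n → Cn n → ℂ) (z : Cn n) : ℂ :=
  -∑ j, (wz j (f j) z - wzR j φ z * f j z)

/-- `f ∈ C_c^∞(Ω)`: smooth, compactly supported, with support inside `Ω`. -/
def SmoothCompSupp {n : ℕ} (Ω : Set (Cn n)) (f : Cn n → ℂ) : Prop :=
  ContDiff ℝ (⊤ : ℕ∞) f ∧ HasCompactSupport f ∧ tsupport f ⊆ Ω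

section LeviAux

def gfun : ℝ → ℝ := fun s => Real.exp (-Real.sqrt (-s))
def gfun1 : ℝ → ℝ := fun s => Real.exp (-Real.sqrt (-s)) * (2 * Real.sqrt (-s))⁻¹

lemma sqrt_neg_hasDeriv {s : ℝ} (hs : s < 0) :
    HasDerivAt (fun x : ℝ => Real.sqrt (-x)) (-(2 * Real.sqrt (-s))⁻¹) s := by
  have h1 : HasDerivAt (fun x : ℝ => -x) (-1) s := (hasDerivAt_id s).neg
  have h2 := (Real.hasDerivAt_sqrt (x := -s) (by linarith)).comp s h1
  have h3 : (Real.sqrt ∘ fun x : ℝ => -x) = fun x : ℝ => Real.sqrt (-x) := rfl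
  rw [h3] at h2
  rw [show -(2 * Real.sqrt (-s))⁻¹ = 1 / (2 * Real.sqrt (-s)) * -1 by ring]
  exact h2

lemma gfun_hasDeriv {s : ℝ} (hs : s < 0) : HasDerivAt gfun (gfun1 s) s := by
  have hu := (sqrt_neg_hasDeriv hs).neg
  have h2 := hu.exp
  show HasDerivAt (fun x => Real.exp (-Real.sqrt (-x))) (gfun1 s) s
  simpa [gfun, gfun1] using h2

lemma gfun1_pos {s : ℝ} (hs : s < 0) : 0 < gfun1 s := by
  have hu0 : 0 < Real.sqrt (-s) := Real.sqrt_pos.2 (by linarith)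
  unfold gfun1; positivity

lemma gfun1_hasDeriv {s : ℝ} (hs : s < 0) : ∃ d, 0 ≤ d ∧ HasDerivAt gfun1 d s := by
  have hu0 : 0 < Real.sqrt (-s) := Real.sqrt_pos.2 (by linarith)
  have h1 := gfun_hasDeriv hs
  have h2a : HasDerivAt (fun x : ℝ => 2 * Real.sqrt (-x)) (2 * -(2 * Real.sqrt (-s))⁻¹) s :=
    (sqrt_neg_hasDeriv hs).const_mul 2
  have h2 := h2a.inv (by positivity)
  have h3 := h1.mul h2
  have h5 : -(2 * -(2 * Real.sqrt (-s))⁻¹) = 2 * (2 * Real.sqrt (-s))⁻¹ := by ring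
  rw [h5] at h3
  refine ⟨_, ?_, h3⟩
  have hg1 : 0 < gfun1 s := gfun1_pos hs
  have hg0 : 0 ≤ gfun s := (Real.exp_pos _).le
  simp only [Pi.inv_apply]
  positivity

lemma gfun_nonneg (s : ℝ) : 0 ≤ gfun s := (Real.exp_pos _).le

lemma gfun_le_one (s : ℝ) : gfun s ≤ 1 :=
  Real.exp_le_one_iff.2 (neg_nonpos.2 (Real.sqrt_nonneg _))

lemma gfun1_large {M : ℝ} (hM : 0 < M) : ∃ ε > (0:ℝ), ∀ s, -ε < s → s < 0 → M ≤ gfun1 s := by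
  refine ⟨(min 1 (6 * M)⁻¹) ^ 2, by positivity, fun s h1 h2 => ?_⟩
  set a := min 1 (6 * M)⁻¹ with ha
  have ha0 : 0 < a := by positivity
  set u := Real.sqrt (-s) with hu
  have hu0 : 0 < u := Real.sqrt_pos.2 (by linarith)
  have hua : u < a := by
    have h4 : -s < a ^ 2 := by linarith
    calc u < Real.sqrt (a ^ 2) := Real.sqrt_lt_sqrt (by linarith) h4
      _ = a := by rw [Real.sqrt_sq ha0.le]
  have hu1 : u ≤ 1 := (hua.le.trans (min_le_left _ _))
  have huM : u ≤ (6 * M)⁻¹ := (hua.le.trans (min_le_right _ _))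
  have h3e : Real.exp u ≤ 3 := by
    calc Real.exp u ≤ Real.exp 1 := Real.exp_le_exp.2 hu1
      _ ≤ 3 := Real.exp_one_lt_d9.le.trans (by norm_num)
  have hexp : (1:ℝ)/3 ≤ Real.exp (-u) := by
    rw [Real.exp_neg, one_div]
    exact inv_anti₀ (Real.exp_pos u) h3e
  have h6 : 6 * M * u ≤ 1 := by
    have := (mul_le_mul_of_nonneg_left huM (by positivity : (0:ℝ) ≤ 6 * M))
    rwa [mul_inv_cancel₀ (by positivity)] at this
  have hinv : 3 * M ≤ (2 * u)⁻¹ := by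
    rw [le_inv_comm₀ (by positivity) (by positivity)]
    nlinarith [mul_inv_cancel₀ (ne_of_gt (by positivity : (0:ℝ) < 3 * M)), hu0, hM]
  have hgs : gfun1 s = Real.exp (-u) * (2 * u)⁻¹ := rfl
  rw [hgs]
  calc M = (1/3) * (3 * M) := by ring
    _ ≤ Real.exp (-u) * (2 * u)⁻¹ :=
        mul_le_mul hexp hinv (by positivity) (Real.exp_pos _).le

lemma levi_zero {n : ℕ} (u : Cn n → ℝ) (z : Cn n) : levi u z 0 = 0 := by
  have h : (fun w : Cn n => fderiv ℝ u w (0 : Cn n)) = fun _ => (0:ℝ) := by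
    funext w; exact (fderiv ℝ u w).map_zero
  simp [levi, h]

variable {n : ℕ}

lemma hasFDerivAt_fderiv_apply (u : Cn n → ℝ) (hu : ContDiff ℝ (⊤:ℕ∞) u) (z v : Cn n) :
    HasFDerivAt (fun w => fderiv ℝ u w v) ((fderiv ℝ (fderiv ℝ u) z).flip v) z := by
  have hD : ContDiff ℝ (⊤:ℕ∞) (fderiv ℝ u) :=
    hu.fderiv_right (le_refl _)
  have hd : HasFDerivAt (fderiv ℝ u) (fderiv ℝ (fderiv ℝ u) z) z :=
    (hD.differentiable (by simp) z).hasFDerivAt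
  have h := (ContinuousLinearMap.apply ℝ ℝ v).hasFDerivAt.comp z hd
  exact h

lemma levi_eq_second (u : Cn n → ℝ) (hu : ContDiff ℝ (⊤:ℕ∞) u) (z t : Cn n) :
    levi u z t = (1/4) * ((fderiv ℝ (fderiv ℝ u) z t) t
      + (fderiv ℝ (fderiv ℝ u) z (Complex.I • t)) (Complex.I • t)) := by
  rw [levi, (hasFDerivAt_fderiv_apply u hu z t).fderiv,
    (hasFDerivAt_fderiv_apply u hu z (Complex.I • t)).fderiv]
  simp [ContinuousLinearMap.flip_apply]

lemma levi_smul (u : Cn n → ℝ) (hu : ContDiff ℝ (⊤:ℕ∞) u) (z t : Cn n) (a : ℝ) :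
    levi u z (a • t) = a^2 * levi u z t := by
  rw [levi_eq_second u hu, levi_eq_second u hu]
  have hc : Complex.I • (a • t) = a • (Complex.I • t) := smul_comm _ _ _
  rw [hc]
  simp only [ContinuousLinearMap.map_smul, ContinuousLinearMap.smul_apply, smul_eq_mul]
  ring

lemma levi_comp (r : Cn n → ℝ) (hr : ContDiff ℝ (⊤:ℕ∞) r) (g g1 : ℝ → ℝ)
    {Ω : Set (Cn n)} (hΩ : IsOpen Ω) (hΩr : ∀ w ∈ Ω, r w < 0)
    (hg : ∀ s < (0:ℝ), HasDerivAt g (g1 s) s)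
    {z : Cn n} (hz : z ∈ Ω) {d : ℝ} (hd : HasDerivAt g1 d (r z)) (t : Cn n) :
    levi (fun w => g (r w)) z t = g1 (r z) * levi r z t
      + d * ((1/4) * ((fderiv ℝ r z t)^2 + (fderiv ℝ r z (Complex.I • t))^2)) := by
  have hrd : ∀ w, HasFDerivAt r (fderiv ℝ r w) w :=
    fun w => (hr.differentiable (by simp) w).hasFDerivAt
  have key : ∀ v : Cn n,
      fderiv ℝ (fun w => fderiv ℝ (fun x => g (r x)) w v) z v
        = g1 (r z) * ((fderiv ℝ (fderiv ℝ r) z v) v) + d * (fderiv ℝ r z v)^2 := by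
    intro v
    have hev : (fun w => fderiv ℝ (fun x => g (r x)) w v)
        =ᶠ[nhds z] (fun w => g1 (r w) * fderiv ℝ r w v) := by
      filter_upwards [hΩ.mem_nhds hz] with w hw
      have hc : HasFDerivAt (fun x => g (r x)) (g1 (r w) • fderiv ℝ r w) w :=
        (hg _ (hΩr w hw)).comp_hasFDerivAt w (hrd w)
      rw [hc.fderiv]
      simp
    rw [hev.fderiv_eq]
    have hA : HasFDerivAt (fun w => g1 (r w)) (d • fderiv ℝ r z) z :=
      hd.comp_hasFDerivAt z (hrd z)
    have hB := hasFDerivAt_fderiv_apply r hr z v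
    have hAB := hA.mul hB
    rw [show (fun w => g1 (r w) * fderiv ℝ r w v) = (fun w => g1 (r w)) * (fun w => fderiv ℝ r w v) from rfl, hAB.fderiv]
    simp [ContinuousLinearMap.flip_apply]
    ring
  rw [levi, key t, key (Complex.I • t), levi_eq_second r hr]
  ring

end LeviAux

/-- on a smoothly bounded domain with a strictly plurisubharmonic defining
function, there is a bounded smooth plurisubharmonic function whose complex Hessian blows up
at every boundary point. -/
theorem stmt11 {n : ℕ} (r : Cn n → ℝ) (hr : ContDiff ℝ (⊤ : ℕ∞) r)
    (Ω : Set (Cn n)) (hΩdef : Ω = {z | r z < 0}) (hne : Ω.Nonempty)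
    (hgrad : ∀ z, r z = 0 → fderiv ℝ r z ≠ 0)
    (U : Set (Cn n)) (hU : IsOpen U) (hclU : closure Ω ⊆ U)
    (hspsh : ∀ z ∈ U, ∀ t : Cn n, t ≠ 0 → 0 < levi r z t) :
    ∃ C : ℝ, 0 < C ∧ ∃ φ : Cn n → ℝ,
      ContDiffOn ℝ (⊤ : ℕ∞) φ Ω ∧
      (∀ z ∈ Ω, 0 ≤ φ z ∧ φ z ≤ C) ∧
      (∀ z ∈ Ω, ∀ t : Cn n, 0 ≤ levi φ z t) ∧
      (∀ p ∈ frontier Ω, ∀ M : ℝ, 0 < M → ∃ δ : ℝ, 0 < δ ∧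
        ∀ z ∈ Ω, ‖z - p‖ < δ → ∀ t : Cn n, M * ‖t‖^2 ≤ levi φ z t) := by
  have hΩopen : IsOpen Ω := by
    rw [hΩdef]; exact isOpen_lt hr.continuous continuous_const
  have hΩr : ∀ w ∈ Ω, r w < 0 := fun w hw => by rw [hΩdef] at hw; exact hw
  have hΩU : ∀ w ∈ Ω, w ∈ U := fun w hw => hclU (subset_closure hw)
  have hg : ∀ s < (0:ℝ), HasDerivAt gfun (gfun1 s) s := fun s hs => gfun_hasDeriv hs
  refine ⟨1, one_pos, fun z => gfun (r z), ?_, fun z _ => ⟨gfun_nonneg _, gfun_le_one _⟩, ?_, ?_⟩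
  · -- smoothness
    intro z hz
    have hrz : r z < 0 := hΩr z hz
    have h1 : ContDiffAt ℝ (⊤:ℕ∞) (fun w => -(r w)) z := hr.contDiffAt.neg
    have h2 : ContDiffAt ℝ (⊤:ℕ∞) (fun w => Real.sqrt (-(r w))) z :=
      (Real.contDiffAt_sqrt (ne_of_gt (by linarith) : -(r z) ≠ 0)).comp z h1
    have h3 : ContDiffAt ℝ (⊤:ℕ∞) (fun w => Real.exp (-(Real.sqrt (-(r w))))) z :=
      Real.contDiff_exp.contDiffAt.comp z h2.neg
    exact h3.contDiffWithinAt
  · -- plurisubharmonic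
    intro z hz t
    by_cases ht : t = 0
    · subst ht; rw [levi_zero]
    · obtain ⟨d, hd0, hd⟩ := gfun1_hasDeriv (hΩr z hz)
      rw [levi_comp r hr gfun gfun1 hΩopen hΩr hg hz hd t]
      have h1 : 0 < levi r z t := hspsh z (hΩU z hz) t ht
      have h2 : 0 < gfun1 (r z) := gfun1_pos (hΩr z hz)
      positivity
  · -- blow-up at the boundary
    intro p hp M hM
    have hpU : p ∈ U := hclU (frontier_subset_closure hp)
    have hrp : r p = 0 := by
      have h1 : r p ≤ 0 := by
        have hmem : p ∈ closure Ω := frontier_subset_closure hp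
        have hsub : closure Ω ⊆ {z | r z ≤ 0} :=
          closure_minimal (by rw [hΩdef]; exact fun z (hz : r z < 0) => (le_of_lt hz : r z ≤ 0))
            (isClosed_le hr.continuous continuous_const)
        exact hsub hmem
      have h2 : p ∉ Ω := fun hmem => hp.2 (by rwa [hΩopen.interior_eq])
      have h3 : ¬ r p < 0 := fun hlt => h2 (by rw [hΩdef]; exact hlt)
      linarith
    have hD1 : ContDiff ℝ (⊤:ℕ∞) (fderiv ℝ r) := hr.fderiv_right (le_refl _)
    have hD2' : ContDiff ℝ (⊤:ℕ∞) (fderiv ℝ (fderiv ℝ r)) := hD1.fderiv_right (le_refl _)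
    have hD2 : Continuous (fderiv ℝ (fderiv ℝ r)) := hD2'.continuous
    set F : Cn n × Cn n → ℝ := fun q => (1/4) * ((fderiv ℝ (fderiv ℝ r) q.1 q.2) q.2
      + (fderiv ℝ (fderiv ℝ r) q.1 (Complex.I • q.2)) (Complex.I • q.2)) with hFdef
    have hFc : Continuous F := by
      apply Continuous.mul continuous_const
      apply Continuous.add
      · exact ((hD2.comp continuous_fst).clm_apply continuous_snd).clm_apply continuous_snd
      · exact ((hD2.comp continuous_fst).clm_apply
          (continuous_snd.const_smul Complex.I)).clm_apply
          (continuous_snd.const_smul Complex.I)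
    have hFlevi : ∀ z t, F (z, t) = levi r z t := fun z t => (levi_eq_second r hr z t).symm
    by_cases hS : (sphere (0:Cn n) 1).Nonempty
    · -- main case
      obtain ⟨t0, ht0S, hmin⟩ := (isCompact_sphere (0:Cn n) 1).exists_isMinOn hS
        (hFc.comp (Continuous.prodMk_right p)).continuousOn
      set c := F (p, t0) with hc
      have ht0ne : t0 ≠ 0 := by
        intro h
        rw [mem_sphere_zero_iff_norm, h, norm_zero] at ht0S
        norm_num at ht0S
      have hcpos : 0 < c := by rw [hc, hFlevi]; exact hspsh p hpU t0 ht0ne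
      have hopen : IsOpen {q : Cn n × Cn n | c/2 < F q} := isOpen_lt continuous_const hFc
      have hsub : ({p} ×ˢ sphere (0:Cn n) 1) ⊆ {q | c/2 < F q} := by
        rintro ⟨z', t'⟩ ⟨hz', ht'⟩
        simp only [Set.mem_singleton_iff] at hz'
        have hcmp : c ≤ F (p, t') := hmin ht'
        simp only [Set.mem_setOf_eq]
        rw [hz']
        linarith
      obtain ⟨V, W, hVo, hWo, hpV, hSW, hVW⟩ := generalized_tube_lemma isCompact_singleton
        (isCompact_sphere (0:Cn n) 1) hopen hsub
      obtain ⟨δ1, hδ1, hballV⟩ := Metric.isOpen_iff.1 hVo p (hpV rfl)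
      obtain ⟨ε, hε, hεM⟩ := gfun1_large (M := 2*M/c) (by positivity)
      obtain ⟨δ2, hδ2, hrsmall⟩ := Metric.continuousAt_iff.1
        (hr.continuous.continuousAt (x := p)) ε hε
      refine ⟨min δ1 δ2, lt_min hδ1 hδ2, fun z hz hzp t => ?_⟩
      have hzd : dist z p < min δ1 δ2 := by rwa [dist_eq_norm]
      have hrz : r z < 0 := hΩr z hz
      have hrzε : -ε < r z := by
        have h := hrsmall (lt_of_lt_of_le hzd (min_le_right _ _))
        rw [hrp, Real.dist_eq, sub_zero] at h
        have := abs_lt.1 h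
        linarith [this.1]
      have hg1 : 2*M/c ≤ gfun1 (r z) := hεM _ hrzε hrz
      by_cases ht : t = 0
      · subst ht; rw [levi_zero]; simp
      · have htS : (‖t‖⁻¹:ℝ) • t ∈ sphere (0:Cn n) 1 := by
          rw [mem_sphere_zero_iff_norm]
          exact norm_smul_inv_norm (𝕜 := ℝ) ht
        have hzV : z ∈ V := hballV (by
          rw [Metric.mem_ball]; exact lt_of_lt_of_le hzd (min_le_left _ _))
        have hFz : c/2 < F (z, (‖t‖⁻¹:ℝ) • t) := hVW (Set.mk_mem_prod hzV (hSW htS))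
        have hlevi : c/2 * ‖t‖^2 ≤ levi r z t := by
          have h1 : levi r z ((‖t‖⁻¹:ℝ) • t) = (‖t‖⁻¹)^2 * levi r z t :=
            levi_smul r hr z t _
          rw [hFlevi] at hFz
          have htn : ‖t‖ ≠ 0 := norm_ne_zero_iff.2 ht
          have h2 : levi r z t = ‖t‖^2 * levi r z ((‖t‖⁻¹:ℝ) • t) := by
            rw [h1]; field_simp
          rw [h2]
          have h3 : c/2 ≤ levi r z ((‖t‖⁻¹:ℝ) • t) := hFz.le
          nlinarith [sq_nonneg ‖t‖]
        obtain ⟨d, hd0, hd⟩ := gfun1_hasDeriv hrz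
        rw [levi_comp r hr gfun gfun1 hΩopen hΩr hg hz hd t]
        have hgz : 0 < gfun1 (r z) := gfun1_pos hrz
        have hkey : M * ‖t‖^2 ≤ gfun1 (r z) * levi r z t := by
          calc M * ‖t‖^2 = (2*M/c) * (c/2 * ‖t‖^2) := by field_simp
            _ ≤ gfun1 (r z) * (c/2 * ‖t‖^2) :=
                mul_le_mul_of_nonneg_right hg1 (by positivity)
            _ ≤ gfun1 (r z) * levi r z t := mul_le_mul_of_nonneg_left hlevi hgz.le
        have hpos : 0 ≤ d * ((1/4) * ((fderiv ℝ r z t)^2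
            + (fderiv ℝ r z (Complex.I • t))^2)) := by positivity
        linarith
    · -- degenerate case: the unit sphere is empty (n = 0)
      refine ⟨1, one_pos, fun z hz hzp t => ?_⟩
      have ht : t = 0 := by
        by_contra ht
        exact hS ⟨(‖t‖⁻¹:ℝ) • t, by
          rw [mem_sphere_zero_iff_norm]; exact norm_smul_inv_norm (𝕜 := ℝ) ht⟩
      subst ht
      rw [levi_zero]
      simp
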